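/- Let ψ₀ : ℝ → ℝ be locally absolutely continuous with weak derivative ψ₁ : ℝ → ℝ, in the sense that ψ₀(b) − ψ₀(a) = ∫_a^b ψ₁(η) dη for all a < b, and suppose that ∫ |ψ₀(η)| φ(η; m, ν²) dη < ∞ and ∫ |ψ₁(η)| φ(η; m, ν²) dη < ∞ for every m ∈ ℝ and every ν > 0. Then for every m ∈ ℝ and ν > 0, the partial derivative with respect to m of Ψ₀(m, ν) = ∫ ψ₀(η) φ(η; m, ν²) dη exists and equals ∫ ψ₁(η) φ(η; m, ν²) dη. -/

import Mathlib

open MeasureTheory Real Filter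

/-- Gaussian density with mean `m` and variance `ν ^ 2`, evaluated at `x`:
`φ(x; m, ν²) = (2πν²)^{-1/2} exp(−(x−m)²/(2ν²))`. -/
noncomputable def gpdf (m ν x : ℝ) : ℝ :=
  (Real.sqrt (2 * Real.pi * ν ^ 2))⁻¹ * Real.exp (-((x - m) ^ 2) / (2 * ν ^ 2))

/-- Gaussian cumulative distribution function with mean `m` and variance `ν ^ 2`:
`Φ(c; m, ν²) = ∫_{−∞}^{c} φ(η; m, ν²) dη`. -/
noncomputable def gcdf (m ν c : ℝ) : ℝ := ∫ x in Set.Iio c, gpdf m ν x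

lemma gpdf_pos {ν : ℝ} (hν : 0 < ν) (m x : ℝ) : 0 < gpdf m ν x := by
  have h : 0 < 2 * Real.pi * ν ^ 2 := by positivity
  unfold gpdf
  positivity

lemma gpdf_cont_mean (ν x : ℝ) : Continuous fun t => gpdf t ν x := by
  unfold gpdf; fun_prop

lemma gpdf_cont (m ν : ℝ) : Continuous fun x => gpdf m ν x := by
  unfold gpdf; fun_prop

lemma gpdf_shift (t ν z : ℝ) : gpdf t ν (t + z) = gpdf 0 ν z := by
  simp [gpdf]

lemma gpdf_bound {ν : ℝ} (hν : 0 < ν) {t c : ℝ} (h : |t - c| ≤ 1) (η : ℝ) :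
    gpdf t ν η ≤ 2 * Real.exp (1 / (2 * ν ^ 2)) * gpdf c (2 * ν) η := by
  have hs : Real.sqrt (2 * Real.pi * (2 * ν) ^ 2) = 2 * Real.sqrt (2 * Real.pi * ν ^ 2) := by
    rw [show 2 * Real.pi * (2 * ν) ^ 2 = 2 ^ 2 * (2 * Real.pi * ν ^ 2) by ring,
      Real.sqrt_mul (by positivity), Real.sqrt_sq (by norm_num)]
  have hsq : (0:ℝ) < Real.sqrt (2 * Real.pi * ν ^ 2) := by positivity
  have hexp : Real.exp (-((η - t) ^ 2) / (2 * ν ^ 2)) ≤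
      Real.exp (1 / (2 * ν ^ 2)) * Real.exp (-((η - c) ^ 2) / (2 * (2 * ν) ^ 2)) := by
    rw [← Real.exp_add]
    apply Real.exp_le_exp.2
    rw [div_add_div _ _ (by positivity) (by positivity)]
    rw [div_le_div_iff₀ (by positivity) (by positivity)]
    have h2 : (t - c) ^ 2 ≤ 1 := by
      have := abs_nonneg (t - c)
      nlinarith [sq_abs (t - c)]
    have key : (η - c) ^ 2 ≤ 4 * (η - t) ^ 2 + 4 := by
      nlinarith [sq_nonneg ((η - t) - (t - c)), sq_nonneg (η - t)]
    nlinarith [mul_le_mul_of_nonneg_left key (show (0:ℝ) ≤ 4 * (ν ^ 2 * ν ^ 2) by positivity),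
      sq_nonneg (η - t), mul_pos (mul_pos hν hν) (mul_pos hν hν)]
  unfold gpdf
  rw [hs]
  calc (Real.sqrt (2 * Real.pi * ν ^ 2))⁻¹ * Real.exp (-((η - t) ^ 2) / (2 * ν ^ 2))
      ≤ (Real.sqrt (2 * Real.pi * ν ^ 2))⁻¹ *
        (Real.exp (1 / (2 * ν ^ 2)) * Real.exp (-((η - c) ^ 2) / (2 * (2 * ν) ^ 2))) := by
        exact mul_le_mul_of_nonneg_left hexp (by positivity)
    _ = 2 * Real.exp (1 / (2 * ν ^ 2)) *
        ((2 * Real.sqrt (2 * Real.pi * ν ^ 2))⁻¹ * Real.exp (-((η - c) ^ 2) / (2 * (2 * ν) ^ 2))) := by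
        field_simp

lemma translate_integral (f : ℝ → ℝ) (ν t : ℝ) :
    ∫ η, f η * gpdf t ν η = ∫ z, f (t + z) * gpdf 0 ν z := by
  rw [← integral_add_left_eq_self (μ := volume) (fun η => f η * gpdf t ν η) t]
  simp only [gpdf_shift]

lemma translate_integrable {f : ℝ → ℝ} {ν : ℝ} (t : ℝ)
    (h : Integrable (fun η => f η * gpdf t ν η)) :
    Integrable (fun z => f (t + z) * gpdf 0 ν z) := by
  have := h.comp_add_left t
  simpa only [gpdf_shift] using this

lemma abs_mul_gpdf (f : ℝ → ℝ) {ν : ℝ} (hν : 0 < ν) (m x : ℝ) :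
    ‖f x * gpdf m ν x‖ = |f x| * gpdf m ν x := by
  rw [Real.norm_eq_abs, abs_mul, abs_of_nonneg (le_of_lt (gpdf_pos hν m x))]

lemma integrable_mul_gpdf {f : ℝ → ℝ} {ν : ℝ} (hν : 0 < ν) (m : ℝ)
    (hm : AEStronglyMeasurable f (volume : Measure ℝ))
    (h : Integrable (fun η => |f η| * gpdf m ν η)) :
    Integrable (fun η => f η * gpdf m ν η) := by
  refine h.mono' (hm.mul (gpdf_cont m ν).aestronglyMeasurable) ?_
  filter_upwards with x
  rw [abs_mul_gpdf f hν]

lemma intervalIntegrable_of_gpdf {f : ℝ → ℝ} {ν : ℝ} (hν : 0 < ν)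
    (hm : AEStronglyMeasurable f (volume : Measure ℝ))
    (h : Integrable (fun η => |f η| * gpdf 0 ν η)) (a b : ℝ) :
    IntervalIntegrable f volume a b := by
  set R : ℝ := |a| + |b| with hR
  set C : ℝ := Real.sqrt (2 * Real.pi * ν ^ 2) * Real.exp (R ^ 2 / (2 * ν ^ 2)) with hC
  apply IntegrableOn.intervalIntegrable (f := f) (a := a) (b := b)
  refine Integrable.mono' (g := fun x => C * (|f x| * gpdf 0 ν x))
    ((h.const_mul C).integrableOn) (hm.restrict) ?_
  rw [ae_restrict_iff' measurableSet_uIcc]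
  filter_upwards with x hx
  have hx2 : x ^ 2 ≤ R ^ 2 := by
    have ha1 := le_abs_self a; have ha2 := neg_abs_le a
    have hb1 := le_abs_self b; have hb2 := neg_abs_le b
    have hab := abs_nonneg a; have hbb := abs_nonneg b
    rcases Set.mem_uIcc.1 hx with ⟨h1, h2⟩ | ⟨h1, h2⟩ <;> nlinarith
  have hkey : (1:ℝ) ≤ C * gpdf 0 ν x := by
    rw [hC, gpdf]
    have hsq : (0:ℝ) < Real.sqrt (2 * Real.pi * ν ^ 2) := by positivity
    rw [show Real.sqrt (2 * Real.pi * ν ^ 2) * Real.exp (R ^ 2 / (2 * ν ^ 2)) *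
        ((Real.sqrt (2 * Real.pi * ν ^ 2))⁻¹ * Real.exp (-((x - 0) ^ 2) / (2 * ν ^ 2))) =
        (Real.sqrt (2 * Real.pi * ν ^ 2) * (Real.sqrt (2 * Real.pi * ν ^ 2))⁻¹) *
        (Real.exp (R ^ 2 / (2 * ν ^ 2)) * Real.exp (-((x - 0) ^ 2) / (2 * ν ^ 2))) by ring,
      mul_inv_cancel₀ (ne_of_gt hsq), one_mul, ← Real.exp_add]
    rw [show (1:ℝ) = Real.exp 0 by simp]
    apply Real.exp_le_exp.2
    rw [sub_zero, ← add_div]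
    apply div_nonneg (by linarith) (by positivity)
  calc ‖f x‖ = |f x| * 1 := by rw [Real.norm_eq_abs, mul_one]
    _ ≤ |f x| * (C * gpdf 0 ν x) := mul_le_mul_of_nonneg_left hkey (abs_nonneg _)
    _ = C * (|f x| * gpdf 0 ν x) := by ring

lemma G_continuous {ψ₁ : ℝ → ℝ} {ν : ℝ} (hν : 0 < ν)
    (hm : AEStronglyMeasurable ψ₁ (volume : Measure ℝ))
    (hint1 : ∀ m ν : ℝ, 0 < ν → Integrable (fun η => |ψ₁ η| * gpdf m ν η)) :
    Continuous fun t => ∫ η, ψ₁ η * gpdf t ν η := by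
  rw [continuous_iff_continuousAt]
  intro c
  have h2ν : 0 < 2 * ν := by linarith
  set C : ℝ := 2 * Real.exp (1 / (2 * ν ^ 2)) with hCdef
  have hCpos : 0 < C := by positivity
  apply continuousAt_of_dominated (bound := fun η => C * (|ψ₁ η| * gpdf c (2 * ν) η))
  · filter_upwards with t
    exact hm.mul (gpdf_cont t ν).aestronglyMeasurable
  · have hball : ∀ᶠ t in nhds c, |t - c| ≤ 1 := by
      have := Metric.closedBall_mem_nhds c (one_pos)
      filter_upwards [this] with t ht
      simpa [Real.dist_eq] using ht
    filter_upwards [hball] with t ht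
    filter_upwards with η
    rw [abs_mul_gpdf ψ₁ hν]
    calc |ψ₁ η| * gpdf t ν η ≤ |ψ₁ η| * (C * gpdf c (2 * ν) η) :=
          mul_le_mul_of_nonneg_left (gpdf_bound hν ht η) (abs_nonneg _)
      _ = C * (|ψ₁ η| * gpdf c (2 * ν) η) := by ring
  · exact (hint1 c (2 * ν) h2ν).const_mul C
  · filter_upwards with η
    exact (continuousAt_const.mul (gpdf_cont_mean ν η).continuousAt)

lemma key_swap {ψ₁ : ℝ → ℝ} {ν : ℝ} (hν : 0 < ν)
    (hm : AEStronglyMeasurable ψ₁ (volume : Measure ℝ))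
    (hint1 : ∀ m ν : ℝ, 0 < ν → Integrable (fun η => |ψ₁ η| * gpdf m ν η))
    {c a b : ℝ} (hca : c - 1 ≤ a) (hbc : b ≤ c + 1) (hab : a ≤ b) :
    ∫ z, (∫ t in Set.Ioc a b, ψ₁ (t + z)) * gpdf 0 ν z
      = ∫ t in Set.Ioc a b, ∫ z, ψ₁ (t + z) * gpdf 0 ν z := by
  have h2ν : 0 < 2 * ν := by linarith
  set μ : Measure ℝ := volume.restrict (Set.Ioc a b) with hμ
  set C : ℝ := 2 * Real.exp (1 / (2 * ν ^ 2)) with hCdef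
  set K : ℝ := ∫ η, |ψ₁ η| * gpdf c (2 * ν) η with hKdef
  set f : ℝ × ℝ → ℝ := fun p => ψ₁ (p.1 + p.2) * gpdf 0 ν p.2 with hfdef
  have hqmp : Measure.QuasiMeasurePreserving (fun p : ℝ × ℝ => p.1 + p.2)
      (μ.prod volume) volume := by
    have h1 := (measurePreserving_prod_add μ (volume : Measure ℝ)).quasiMeasurePreserving
    exact Measure.QuasiMeasurePreserving.comp Measure.quasiMeasurePreserving_snd h1
  have hfm : AEStronglyMeasurable f (μ.prod volume) := by
    apply AEStronglyMeasurable.mul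
    · exact hm.comp_quasiMeasurePreserving hqmp
    · exact ((gpdf_cont 0 ν).comp continuous_snd).aestronglyMeasurable
  have hint_t : ∀ t : ℝ, Integrable (fun z => ψ₁ (t + z) * gpdf 0 ν z) := by
    intro t
    exact translate_integrable t (integrable_mul_gpdf hν t hm (hint1 t ν hν))
  have habs_t : ∀ t : ℝ, |t - c| ≤ 1 → (∫ z, ‖f (t, z)‖) ≤ C * K := by
    intro t ht
    have hdom : Integrable (fun z => C * (|ψ₁ (t + z)| * gpdf c (2 * ν) (t + z))) :=
      (((hint1 c (2 * ν) h2ν).comp_add_left t).const_mul C)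
    have hle : ∀ z : ℝ, ‖f (t, z)‖ ≤ C * (|ψ₁ (t + z)| * gpdf c (2 * ν) (t + z)) := by
      intro z
      show ‖ψ₁ (t + z) * gpdf 0 ν z‖ ≤ _
      rw [Real.norm_eq_abs, abs_mul, abs_of_nonneg (gpdf_pos hν 0 z).le, ← gpdf_shift t ν z]
      calc |ψ₁ (t + z)| * gpdf t ν (t + z)
          ≤ |ψ₁ (t + z)| * (C * gpdf c (2 * ν) (t + z)) :=
            mul_le_mul_of_nonneg_left (gpdf_bound hν ht (t + z)) (abs_nonneg _)
        _ = C * (|ψ₁ (t + z)| * gpdf c (2 * ν) (t + z)) := by ring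
    calc (∫ z, ‖f (t, z)‖) ≤ ∫ z, C * (|ψ₁ (t + z)| * gpdf c (2 * ν) (t + z)) := by
          apply integral_mono_of_nonneg (Filter.Eventually.of_forall fun z => norm_nonneg _)
            hdom (Filter.Eventually.of_forall hle)
      _ = C * ∫ z, |ψ₁ (t + z)| * gpdf c (2 * ν) (t + z) := integral_const_mul _ _
      _ = C * K := by
          rw [hKdef, integral_add_left_eq_self (μ := volume)
            (fun η => |ψ₁ η| * gpdf c (2 * ν) η) t]
  have hprod : Integrable f (μ.prod volume) := by
    rw [integrable_prod_iff hfm]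
    constructor
    · exact Filter.Eventually.of_forall fun t => hint_t t
    · refine Integrable.mono' (g := fun _ => C * K) ?_ hfm.norm.integral_prod_right' ?_
      · rw [hμ]
        exact (integrableOn_const (by simp [Real.volume_Ioc]))
      · rw [hμ, ae_restrict_iff' measurableSet_Ioc]
        filter_upwards with t htIoc
        have ht : |t - c| ≤ 1 := by
          rw [abs_le]
          constructor <;> [linarith [htIoc.1, hca]; linarith [htIoc.2, hbc]]
        rw [Real.norm_eq_abs, abs_of_nonneg (integral_nonneg fun z => norm_nonneg _)]
        exact habs_t t ht
  have hswap := integral_integral_swap (μ := μ) (ν := (volume : Measure ℝ))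
    (f := fun t z => ψ₁ (t + z) * gpdf 0 ν z) hprod
  rw [hswap]
  congr 1
  funext z
  rw [← integral_mul_const]

lemma key_id_le {ψ₀ ψ₁ : ℝ → ℝ} {ν : ℝ} (hν : 0 < ν)
    (hm0 : AEStronglyMeasurable ψ₀ (volume : Measure ℝ))
    (hm1 : AEStronglyMeasurable ψ₁ (volume : Measure ℝ))
    (hweak' : ∀ a b : ℝ, ψ₀ b - ψ₀ a = ∫ η in a..b, ψ₁ η)
    (hint0 : ∀ m ν : ℝ, 0 < ν → Integrable (fun η => |ψ₀ η| * gpdf m ν η))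
    (hint1 : ∀ m ν : ℝ, 0 < ν → Integrable (fun η => |ψ₁ η| * gpdf m ν η))
    {c a b : ℝ} (hca : c - 1 ≤ a) (hbc : b ≤ c + 1) (hab : a ≤ b) :
    (∫ η, ψ₀ η * gpdf b ν η) - (∫ η, ψ₀ η * gpdf a ν η)
      = ∫ t in a..b, ∫ η, ψ₁ η * gpdf t ν η := by
  have hIb : Integrable (fun z => ψ₀ (b + z) * gpdf 0 ν z) :=
    translate_integrable b (integrable_mul_gpdf hν b hm0 (hint0 b ν hν))
  have hIa : Integrable (fun z => ψ₀ (a + z) * gpdf 0 ν z) :=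
    translate_integrable a (integrable_mul_gpdf hν a hm0 (hint0 a ν hν))
  rw [translate_integral ψ₀ ν b, translate_integral ψ₀ ν a, ← integral_sub hIb hIa]
  have step1 : ∀ z : ℝ, ψ₀ (b + z) * gpdf 0 ν z - ψ₀ (a + z) * gpdf 0 ν z
      = (∫ t in Set.Ioc a b, ψ₁ (t + z)) * gpdf 0 ν z := by
    intro z
    rw [← sub_mul]
    congr 1
    rw [hweak' (a + z) (b + z)]
    rw [show (∫ η in (a+z)..(b+z), ψ₁ η) = ∫ t in a..b, ψ₁ (t + z) from
      (intervalIntegral.integral_comp_add_right ψ₁ z).symm]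
    rw [intervalIntegral.integral_of_le hab]
  simp only [step1]
  rw [key_swap hν hm1 hint1 hca hbc hab, intervalIntegral.integral_of_le hab]
  apply setIntegral_congr_fun measurableSet_Ioc
  intro t _
  exact (translate_integral ψ₁ ν t).symm

lemma main_measurable {ψ₀ ψ₁ : ℝ → ℝ}
    (hweak : ∀ a b : ℝ, a < b → ψ₀ b - ψ₀ a = ∫ η in a..b, ψ₁ η)
    (hint0 : ∀ m ν : ℝ, 0 < ν → Integrable (fun η => |ψ₀ η| * gpdf m ν η))
    (hint1 : ∀ m ν : ℝ, 0 < ν → Integrable (fun η => |ψ₁ η| * gpdf m ν η))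
    (m ν : ℝ) (hν : 0 < ν) (hm1 : AEStronglyMeasurable ψ₁ (volume : Measure ℝ)) :
    HasDerivAt (fun m' => ∫ η, ψ₀ η * gpdf m' ν η)
      (∫ η, ψ₁ η * gpdf m ν η) m := by
  have hweak' : ∀ a b : ℝ, ψ₀ b - ψ₀ a = ∫ η in a..b, ψ₁ η := by
    intro a b
    rcases lt_trichotomy a b with h | h | h
    · exact hweak a b h
    · subst h; simp
    · rw [intervalIntegral.integral_symm, ← hweak b a h]; ring
  have hloc : ∀ a b : ℝ, IntervalIntegrable ψ₁ volume a b :=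
    intervalIntegrable_of_gpdf hν hm1 (hint1 0 ν hν)
  have hψ₀cont : Continuous ψ₀ := by
    have hrep : ∀ x : ℝ, ψ₀ x = ψ₀ 0 + ∫ t in (0:ℝ)..x, ψ₁ t := by
      intro x
      have := hweak' 0 x
      linarith
    have : ψ₀ = fun x => ψ₀ 0 + ∫ t in (0:ℝ)..x, ψ₁ t := funext hrep
    rw [this]
    exact continuous_const.add (intervalIntegral.continuous_primitive hloc 0)
  have hm0 : AEStronglyMeasurable ψ₀ (volume : Measure ℝ) :=
    hψ₀cont.aestronglyMeasurable
  set F : ℝ → ℝ := fun m' => ∫ η, ψ₀ η * gpdf m' ν η with hF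
  set G : ℝ → ℝ := fun t => ∫ η, ψ₁ η * gpdf t ν η with hG
  have hGcont : Continuous G := G_continuous hν hm1 hint1
  have hH : HasDerivAt (fun m' => F m + ∫ t in m..m', G t) (G m) m := by
    have := intervalIntegral.integral_hasDerivAt_right
      (a := m) (b := m) ((hGcont.intervalIntegrable m m))
      (hGcont.aestronglyMeasurable.stronglyMeasurableAtFilter)
      (hGcont.continuousAt)
    exact this.const_add (F m)
  have hkey : ∀ m' : ℝ, |m' - m| ≤ 1 → F m' = F m + ∫ t in m..m', G t := by
    intro m' hm'
    rcases le_total m m' with h | h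
    · have := key_id_le (c := m) hν hm0 hm1 hweak' hint0 hint1
        (by linarith) (by rw [abs_le] at hm'; linarith [hm'.2]) h
      rw [hF, hG]
      linarith [this]
    · have := key_id_le (c := m) hν hm0 hm1 hweak' hint0 hint1
        (by rw [abs_le] at hm'; linarith [hm'.1]) (by linarith) h
      rw [hF, hG, intervalIntegral.integral_symm]
      linarith [this]
  have heq : F =ᶠ[nhds m] fun m' => F m + ∫ t in m..m', G t := by
    filter_upwards [Metric.closedBall_mem_nhds m one_pos] with m' hm'
    exact hkey m' (by simpa [Real.dist_eq] using hm')
  exact hH.congr_of_eventuallyEq heq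

lemma Iic_eq_iUnion_Ioc (a : ℝ) : Set.Iic a = ⋃ n : ℕ, Set.Ioc (a - (n + 1 : ℕ)) a := by
  ext x
  simp only [Set.mem_Iic, Set.mem_iUnion, Set.mem_Ioc]
  constructor
  · intro hx
    refine ⟨⌈a - x⌉₊, ?_, hx⟩
    have h1 : a - x ≤ (⌈a - x⌉₊ : ℝ) := Nat.le_ceil _
    push_cast
    linarith
  · rintro ⟨n, _, hx⟩; exact hx

lemma Ioi_eq_iUnion_Ioc (b : ℝ) : Set.Ioi b = ⋃ n : ℕ, Set.Ioc b (b + (n + 1 : ℕ)) := by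
  ext x
  simp only [Set.mem_Ioi, Set.mem_iUnion, Set.mem_Ioc]
  constructor
  · intro hx
    refine ⟨⌈x - b⌉₊, hx, ?_⟩
    have h1 : x - b ≤ (⌈x - b⌉₊ : ℝ) := Nat.le_ceil _
    push_cast
    linarith
  · rintro ⟨n, hx, _⟩; exact hx

lemma psi0_const {ψ₀ ψ₁ : ℝ → ℝ}
    (hweak : ∀ a b : ℝ, a < b → ψ₀ b - ψ₀ a = ∫ η in a..b, ψ₁ η)
    (hbad : ¬ AEStronglyMeasurable ψ₁ (volume : Measure ℝ)) :
    ∀ a b : ℝ, a < b → ψ₀ b = ψ₀ a := by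
  have hzero : ∀ a b : ℝ, a < b →
      ¬ AEStronglyMeasurable ψ₁ (volume.restrict (Set.Ioc a b)) → ψ₀ b = ψ₀ a := by
    intro a b hab hb
    have h := hweak a b hab
    rw [intervalIntegral.integral_of_le hab.le, integral_non_aestronglyMeasurable hb] at h
    linarith
  intro a b hab
  have hcover : Set.Iic a ∪ (Set.Ioc a b ∪ Set.Ioi b) = Set.univ := by
    ext x
    simp only [Set.mem_union, Set.mem_Iic, Set.mem_Ioc, Set.mem_Ioi, Set.mem_univ, iff_true]
    rcases le_or_gt x a with h | h
    · exact Or.inl h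
    · rcases le_or_gt x b with h2 | h2
      · exact Or.inr (Or.inl ⟨h, h2⟩)
      · exact Or.inr (Or.inr h2)
  have hsplit : ¬ AEStronglyMeasurable ψ₁ (volume.restrict (Set.Iic a)) ∨
      ¬ AEStronglyMeasurable ψ₁ (volume.restrict (Set.Ioc a b)) ∨
      ¬ AEStronglyMeasurable ψ₁ (volume.restrict (Set.Ioi b)) := by
    by_contra h
    push_neg at h
    apply hbad
    have := aestronglyMeasurable_union_iff.2 ⟨h.1, aestronglyMeasurable_union_iff.2 ⟨h.2.1, h.2.2⟩⟩
    rwa [hcover, Measure.restrict_univ] at this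
  rcases hsplit with hca | hcab | hcb
  · rw [Iic_eq_iUnion_Ioc a] at hca
    have : ∃ n : ℕ, ¬ AEStronglyMeasurable ψ₁ (volume.restrict (Set.Ioc (a - (n + 1 : ℕ)) a)) := by
      by_contra h
      push_neg at h
      exact hca (aestronglyMeasurable_iUnion_iff.2 h)
    obtain ⟨n, hn⟩ := this
    set a' : ℝ := a - (n + 1 : ℕ) with ha'
    have ha'a : a' < a := by
      rw [ha']; have : (0:ℝ) < (n:ℝ) + 1 := by positivity
      push_cast; linarith
    have hbig : ¬ AEStronglyMeasurable ψ₁ (volume.restrict (Set.Ioc a' b)) := by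
      intro h
      exact hn (h.mono_measure (Measure.restrict_mono (Set.Ioc_subset_Ioc_right hab.le) le_rfl))
    have e1 : ψ₀ a = ψ₀ a' := hzero a' a ha'a hn
    have e2 : ψ₀ b = ψ₀ a' := hzero a' b (lt_trans ha'a hab) hbig
    rw [e1, e2]
  · exact hzero a b hab hcab
  · rw [Ioi_eq_iUnion_Ioc b] at hcb
    have : ∃ n : ℕ, ¬ AEStronglyMeasurable ψ₁ (volume.restrict (Set.Ioc b (b + (n + 1 : ℕ)))) := by
      by_contra h
      push_neg at h
      exact hcb (aestronglyMeasurable_iUnion_iff.2 h)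
    obtain ⟨n, hn⟩ := this
    set b' : ℝ := b + (n + 1 : ℕ) with hb'
    have hbb' : b < b' := by
      rw [hb']; have : (0:ℝ) < (n:ℝ) + 1 := by positivity
      push_cast; linarith
    have hbig : ¬ AEStronglyMeasurable ψ₁ (volume.restrict (Set.Ioc a b')) := by
      intro h
      exact hn (h.mono_measure (Measure.restrict_mono (Set.Ioc_subset_Ioc_left hab.le) le_rfl))
    have e1 : ψ₀ b' = ψ₀ b := hzero b b' hbb' hn
    have e2 : ψ₀ b' = ψ₀ a := hzero a b' (lt_trans hab hbb') hbig
    rw [← e1, e2]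

lemma integral_gpdf_eq_one {ν : ℝ} (hν : 0 < ν) (m : ℝ) : ∫ x, gpdf m ν x = 1 := by
  have hveq : gpdf m ν = ProbabilityTheory.gaussianPDFReal m ⟨ν ^ 2, sq_nonneg ν⟩ := rfl
  rw [hveq]
  apply ProbabilityTheory.integral_gaussianPDFReal_eq_one
  intro h
  have : ν ^ 2 = 0 := congrArg NNReal.toReal h
  exact (pow_ne_zero 2 hν.ne') this

theorem psi1_deriv_under_integral (ψ₀ ψ₁ : ℝ → ℝ)
    (hweak : ∀ a b : ℝ, a < b → ψ₀ b - ψ₀ a = ∫ η in a..b, ψ₁ η)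
    (hint0 : ∀ m ν : ℝ, 0 < ν → Integrable (fun η => |ψ₀ η| * gpdf m ν η))
    (hint1 : ∀ m ν : ℝ, 0 < ν → Integrable (fun η => |ψ₁ η| * gpdf m ν η))
    (m ν : ℝ) (hν : 0 < ν) :
    HasDerivAt (fun m' => ∫ η, ψ₀ η * gpdf m' ν η)
      (∫ η, ψ₁ η * gpdf m ν η) m := by
  by_cases hmeas : AEStronglyMeasurable ψ₁ (volume : Measure ℝ)
  · exact main_measurable hweak hint0 hint1 m ν hν hmeas
  · have hc := psi0_const hweak hmeas
    have hcall : ∀ x : ℝ, ψ₀ x = ψ₀ 0 := by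
      intro x
      rcases lt_trichotomy x 0 with h | h | h
      · exact (hc x 0 h).symm
      · rw [h]
      · exact hc 0 x h
    have hFconst : (fun m' => ∫ η, ψ₀ η * gpdf m' ν η) = fun _ => ψ₀ 0 := by
      funext m'
      rw [show (fun η => ψ₀ η * gpdf m' ν η) = fun η => ψ₀ 0 * gpdf m' ν η from
        funext fun η => by rw [hcall η]]
      rw [integral_const_mul, integral_gpdf_eq_one hν m', mul_one]
    have hRHS : ∫ η, ψ₁ η * gpdf m ν η = 0 := by
      apply integral_non_aestronglyMeasurable
      intro h
      apply hmeas
      have hcont : Continuous fun x => (gpdf m ν x)⁻¹ :=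
        (gpdf_cont m ν).inv₀ fun x => (gpdf_pos hν m x).ne'
      have h2 : AEStronglyMeasurable (fun η => ψ₁ η * gpdf m ν η * (gpdf m ν η)⁻¹)
          (volume : Measure ℝ) := h.mul hcont.aestronglyMeasurable
      apply h2.congr
      filter_upwards with η
      rw [mul_assoc, mul_inv_cancel₀ (gpdf_pos hν m η).ne', mul_one]
    rw [hRHS, hFconst]
    exact hasDerivAt_const m (ψ₀ 0)
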